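/- If μ_q is a 1-admissible distribution on ℤ_p, i.e. |μ_q(a + p^N ℤ_p)|_p ≤ c_N / |[p^N]_q|_p with c_N → 0, then μ_q is a weakly p-adic q-invariant distribution: |[p^n]_q μ_q(a+p^n ℤ_p) − [p^{n+1}]_q μ_q(a+p^{n+1} ℤ_p)|_p ≤ δ_n for some sequence δ_n → 0 independent of a. -/
import Mathlib


open Filter Finset Topology

variable {p : ℕ} [hp : Fact p.Prime] {K : Type*} [NontriviallyNormedField K]

/-- The `q`-analogue `[n]_q = (1 - q^n)/(1 - q)` of a natural number `n`. -/
noncomputable def qNum (q : K) (n : ℕ) : K := (1 - q ^ n) / (1 - q)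

/-- `f : ℤ_p → K` is a `C¹` (strictly differentiable) function: the difference quotient
`Δ₁f(m,x) = (f(x+m) - f(x))/m` extends to a continuous function of `(m, x)`. Here
`ι : ℤ_p →+* K` is the (isometric) embedding of `ℤ_p` into `K`. -/
def IsC1 (ι : PadicInt p →+* K) (f : PadicInt p → K) : Prop :=
  ∃ Df : PadicInt p × PadicInt p → K, Continuous Df ∧
    ∀ m x : PadicInt p, m ≠ 0 → Df (m, x) * ι m = f (x + m) - f x

/-- A `K`-valued distribution on `ℤ_p`: `μ x n` is the value on the ball `x + pⁿℤ_p`;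
it depends only on the ball and is finitely additive under splitting a ball of level `n`
into the `p` balls of level `n+1`. -/
def IsDist (μ : PadicInt p → ℕ → K) : Prop :=
  (∀ (x y : PadicInt p) (n : ℕ), ‖x - y‖ ≤ (p : ℝ) ^ (-(n : ℤ)) → μ x n = μ y n) ∧
  ∀ (x : PadicInt p) (n : ℕ),
    μ x n = ∑ i ∈ range p, μ (x + (i : PadicInt p) * (p : PadicInt p) ^ n) (n + 1)

/-- a 1-admissible distribution (`‖μ_q(a+p^Nℤ_p)‖ ≤ c_N/‖[p^N]_q‖`, `c_N → 0`)
is a weakly p-adic q-invariant distribution. -/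
theorem one_admissible_implies_weakly_invariant
(q : K) (hna : IsNonarchimedean (‖·‖ : K → ℝ)) (hpK : ‖(p : K)‖ = (p : ℝ)⁻¹)
    (hq : ‖1 - q‖ < (p : ℝ) ^ (-1 / ((p : ℝ) - 1))) (hq1 : q ≠ 1)
    (μ : PadicInt p → ℕ → K) (hμ : IsDist μ)
    (hadm : ∃ c : ℕ → ℝ, Tendsto c atTop (𝓝 0) ∧
      ∀ (x : PadicInt p) (n : ℕ), ‖μ x n‖ ≤ c n / ‖qNum q (p ^ n)‖) :
    ∃ δ : ℕ → ℝ, Tendsto δ atTop (𝓝 0) ∧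
      ∀ (x : PadicInt p) (n : ℕ),
        ‖qNum q (p ^ n) * μ x n - qNum q (p ^ (n + 1)) * μ x (n + 1)‖ ≤ δ n := by
  obtain ⟨c, hc, hb⟩ := hadm
  have key : ∀ (x : PadicInt p) (n : ℕ), ‖qNum q (p ^ n) * μ x n‖ ≤ |c n| := by
    intro x n
    rw [norm_mul]
    by_cases h : qNum q (p ^ n) = 0
    · simp [h]
    · have hpos : 0 < ‖qNum q (p ^ n)‖ := norm_pos_iff.mpr h
      calc ‖qNum q (p ^ n)‖ * ‖μ x n‖ ≤ ‖qNum q (p ^ n)‖ * (c n / ‖qNum q (p ^ n)‖) := by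
            exact mul_le_mul_of_nonneg_left (hb x n) hpos.le
        _ = c n := by field_simp
        _ ≤ |c n| := le_abs_self _
  refine ⟨fun n => |c n| + |c (n + 1)|, ?_, ?_⟩
  · have h1 : Tendsto (fun n => |c n|) atTop (𝓝 0) := by
      simpa using hc.abs
    have h2 : Tendsto (fun n => |c (n + 1)|) atTop (𝓝 0) :=
      h1.comp (tendsto_add_atTop_nat 1)
    simpa using h1.add h2
  · intro x n
    exact (norm_sub_le _ _).trans (add_le_add (key x n) (key x (n + 1)))
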